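/- If the characteristic of K does not divide |G| and ρ : G → Aut(V) is an irreducible representation, then K[G] decomposes as a direct sum of unital algebras W ⊕ ker(ρ̃), where W is isomorphic as an algebra to the image of ρ̃ : K[G] → End(V). -/

import Mathlib

set_option synthInstance.maxHeartbeats 800000
set_option maxHeartbeats 800000

open MonoidAlgebra in
theorem exists_central_unit_aux {K G : Type*} [Field K] [Group G] [Fintype G]
    (hchar : ¬ (ringChar K ∣ Fintype.card G))
    (I : Submodule K (MonoidAlgebra K G))
    (hleft : ∀ (a : MonoidAlgebra K G), ∀ x ∈ I, a * x ∈ I)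
    (hright : ∀ (a : MonoidAlgebra K G), ∀ x ∈ I, x * a ∈ I) :
    ∃ u' ∈ I, (∀ x, u' * x = x * u') ∧ (∀ x ∈ I, u' * x = x) := by
  classical
  obtain ⟨q, hq⟩ := Submodule.exists_isCompl I
  set f : MonoidAlgebra K G →ₗ[K] MonoidAlgebra K G :=
    I.subtype ∘ₗ (I.projectionOnto q hq) with hf
  have hf_mem : ∀ x, f x ∈ I := fun x => (I.projectionOnto q hq x).2
  have hf_fix : ∀ x ∈ I, f x = x := by
    intro x hx
    have := Submodule.linearProjOfIsCompl_apply_left hq ⟨x, hx⟩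
    simp only [hf, LinearMap.comp_apply]
    rw [show x = ((⟨x, hx⟩ : I) : MonoidAlgebra K G) from rfl, this]
    rfl
  set c : K := (Fintype.card G : K)⁻¹ with hc
  have hcard : (Fintype.card G : K) ≠ 0 := by
    simpa [CharP.cast_eq_zero_iff K (ringChar K)] using hchar
  set p : MonoidAlgebra K G →ₗ[K] MonoidAlgebra K G :=
    (c * c) • ∑ g : G, ∑ h : G,
      (LinearMap.mulLeft K (single g⁻¹ (1:K))) ∘ₗ (LinearMap.mulRight K (single h⁻¹ (1:K))) ∘ₗ f
        ∘ₗ (LinearMap.mulLeft K (single g (1:K))) ∘ₗ (LinearMap.mulRight K (single h (1:K)))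
      with hp
  have p_apply : ∀ x, p x = (c*c) • ∑ g : G, ∑ h : G,
      single g⁻¹ (1:K) * (f (single g (1:K) * (x * single h 1)) * single h⁻¹ 1) := by
    intro x
    simp [hp, LinearMap.sum_apply, LinearMap.mulLeft_apply, LinearMap.mulRight_apply,
      mul_assoc]
  -- p maps into I
  have hp_mem : ∀ x, p x ∈ I := by
    intro x
    rw [p_apply]
    refine I.smul_mem _ (Submodule.sum_mem _ fun g _ => Submodule.sum_mem _ fun h _ => ?_)
    exact hleft _ _ (hright _ _ (hf_mem _))
  -- p fixes I
  have hp_fix : ∀ x ∈ I, p x = x := by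
    intro x hx
    rw [p_apply]
    have hterm : ∀ g h : G,
        single g⁻¹ (1:K) * (f (single g (1:K) * (x * single h 1)) * single h⁻¹ 1) = x := by
      intro g h
      rw [hf_fix _ (hleft _ _ (hright _ _ hx))]
      rw [← mul_assoc, ← mul_assoc, single_mul_single, inv_mul_cancel, one_mul,
        ← one_def, one_mul, mul_assoc, single_mul_single, mul_inv_cancel, one_mul,
        ← one_def, mul_one]
    simp only [hterm, Finset.sum_const, Finset.card_univ, smul_smul]
    rw [← Nat.cast_smul_eq_nsmul K, smul_smul, Nat.cast_mul]
    have hone : c * c * ((Fintype.card G : K) * (Fintype.card G : K)) = 1 := by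
      rw [hc, mul_mul_mul_comm, inv_mul_cancel₀ hcard, one_mul]
    rw [hone, one_smul]
  -- equivariance at generators
  have key_right : ∀ t : G, p (single t (1:K)) = p 1 * single t 1 := by
    intro t
    rw [p_apply, p_apply, smul_mul_assoc, Finset.sum_mul]
    congr 1
    refine Finset.sum_congr rfl fun g _ => ?_
    rw [Finset.sum_mul]
    refine Fintype.sum_equiv (Equiv.mulLeft t) _ _ fun h => ?_
    simp only [Equiv.coe_mulLeft]
    simp [single_mul_single, mul_assoc, mul_inv_rev]
  have key_left : ∀ t : G, p (single t (1:K)) = single t 1 * p 1 := by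
    intro t
    rw [p_apply, p_apply, mul_smul_comm, Finset.mul_sum]
    congr 1
    refine Fintype.sum_equiv (Equiv.mulRight t) _ _ fun g => ?_
    rw [Finset.mul_sum]
    refine Finset.sum_congr rfl fun h _ => ?_
    simp only [Equiv.coe_mulRight]
    simp [single_mul_single, mul_assoc, mul_inv_rev]
    simp [← mul_assoc, single_mul_single, mul_inv_cancel_left]
  have p_eq_right : ∀ x, p x = p 1 * x := by
    have : p = LinearMap.mulLeft K (p 1) := by
      refine MonoidAlgebra.lhom_ext' fun t => LinearMap.ext fun b => ?_
      simp only [LinearMap.comp_apply, lsingle_apply, LinearMap.mulLeft_apply]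
      rw [show single t b = b • single t (1:K) by rw [smul_single', mul_one],
        map_smul, key_right, mul_smul_comm]
    intro x
    conv_lhs => rw [this]
    rw [LinearMap.mulLeft_apply]
  have p_eq_left : ∀ x, p x = x * p 1 := by
    have : p = LinearMap.mulRight K (p 1) := by
      refine MonoidAlgebra.lhom_ext' fun t => LinearMap.ext fun b => ?_
      simp only [LinearMap.comp_apply, lsingle_apply, LinearMap.mulRight_apply]
      rw [show single t b = b • single t (1:K) by rw [smul_single', mul_one],
        map_smul, key_left, smul_mul_assoc]
    intro x
    conv_lhs => rw [this]
    rw [LinearMap.mulRight_apply]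
  refine ⟨p 1, hp_mem 1, fun x => ?_, fun x hx => ?_⟩
  · rw [← p_eq_right, p_eq_left]
  · rw [← p_eq_right, hp_fix x hx]


/-- For an irreducible representation `ρ` of a finite group `G` over a field `K` whose
characteristic does not divide `|G|`, the group algebra `K[G]` decomposes as a direct sum
of unital algebras `W ⊕ ker ρ̃`, where `W` is isomorphic as an algebra to the image of
`ρ̃ : K[G] → End(V)`. -/
theorem group_algebra_splits_off_image
    {K G V : Type*} [Field K] [Group G] [Fintype G]
    [AddCommGroup V] [Module K V] [FiniteDimensional K V] [Nontrivial V]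
    (hchar : ¬ (ringChar K ∣ Fintype.card G))
    (ρ : Representation K G V)
    (hirr : ∀ U : Submodule K V, (∀ (g : G), ∀ x ∈ U, ρ g x ∈ U) → U = ⊥ ∨ U = ⊤) :
    ∃ W : NonUnitalSubalgebra K (MonoidAlgebra K G),
      IsCompl W.toSubmodule (LinearMap.ker ρ.asAlgebraHom.toLinearMap) ∧
      (∃ u ∈ W, ∀ w ∈ W, u * w = w ∧ w * u = w) ∧
      (∃ u', ρ.asAlgebraHom u' = 0 ∧
        ∀ y, ρ.asAlgebraHom y = 0 → u' * y = y ∧ y * u' = y) ∧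
      ∃ e : W ≃ₗ[K] ρ.asAlgebraHom.range,
        ∀ x y : W, e (x * y) = e x * e y := by
  classical
  set I : Submodule K (MonoidAlgebra K G) := LinearMap.ker ρ.asAlgebraHom.toLinearMap with hIdef
  have memI : ∀ x, x ∈ I ↔ ρ.asAlgebraHom x = 0 := by
    intro x
    rw [hIdef, LinearMap.mem_ker, AlgHom.toLinearMap_apply]
  have hleft : ∀ (a : MonoidAlgebra K G), ∀ x ∈ I, a * x ∈ I := by
    intro a x hx
    rw [memI] at hx ⊢
    rw [map_mul, hx, mul_zero]
  have hright : ∀ (a : MonoidAlgebra K G), ∀ x ∈ I, x * a ∈ I := by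
    intro a x hx
    rw [memI] at hx ⊢
    rw [map_mul, hx, zero_mul]
  obtain ⟨u', hu'I, hcomm, hfix⟩ := exists_central_unit_aux hchar I hleft hright
  have hfix' : ∀ x ∈ I, x * u' = x := fun x hx => by rw [← hcomm, hfix x hx]
  have hidem : u' * u' = u' := hfix u' hu'I
  set W : NonUnitalSubalgebra K (MonoidAlgebra K G) :=
    { carrier := {x | u' * x = 0}
      add_mem' := by
        intro a b (ha : u' * a = 0) (hb : u' * b = 0)
        show u' * (a + b) = 0
        rw [mul_add, ha, hb, add_zero]
      zero_mem' := by show u' * 0 = 0; rw [mul_zero]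
      mul_mem' := by
        intro a b (ha : u' * a = 0) _
        show u' * (a * b) = 0
        rw [← mul_assoc, ha, zero_mul]
      smul_mem' := by
        intro k a (ha : u' * a = 0)
        show u' * (k • a) = 0
        rw [mul_smul_comm, ha, smul_zero] } with hWdef
  have memW : ∀ x, x ∈ W ↔ u' * x = 0 := fun x => Iff.rfl
  have memW' : ∀ x, x ∈ W.toSubmodule ↔ u' * x = 0 := fun x => Iff.rfl
  refine ⟨W, ?_, ?_, ?_, ?_⟩
  · constructor
    · rw [Submodule.disjoint_def]
      intro x hxW hxI
      rw [memW'] at hxW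
      rw [← hfix x hxI, hxW]
    · rw [codisjoint_iff, eq_top_iff]
      intro x _
      refine Submodule.mem_sup.mpr ⟨x - u' * x, ?_, u' * x, ?_, by abel⟩
      · rw [memW', mul_sub, ← mul_assoc, hidem, sub_self]
      · exact hright x u' hu'I
  · refine ⟨1 - u', ?_, fun w hw => ⟨?_, ?_⟩⟩
    · rw [memW, mul_sub, mul_one, hidem, sub_self]
    · rw [memW] at hw
      rw [sub_mul, one_mul, hw, sub_zero]
    · rw [memW] at hw
      rw [mul_sub, mul_one, ← hcomm, hw, sub_zero]
  · refine ⟨u', (memI u').mp hu'I, fun y hy => ?_⟩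
    have hyI : y ∈ I := (memI y).mpr hy
    exact ⟨hfix y hyI, hfix' y hyI⟩
  · set φ : W →ₗ[K] ρ.asAlgebraHom.range :=
      { toFun := fun x => ⟨ρ.asAlgebraHom x, ⟨(x : MonoidAlgebra K G), rfl⟩⟩
        map_add' := by intro x y; exact Subtype.ext (by simp)
        map_smul' := by intro k x; exact Subtype.ext (by simp) } with hφdef
    have hbij : Function.Bijective φ := by
      constructor
      · intro x y hxy
        have h1 : ρ.asAlgebraHom ((x : MonoidAlgebra K G) - y) = 0 := by
          have := congrArg Subtype.val hxy
          simp only [hφdef, LinearMap.coe_mk, AddHom.coe_mk] at this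
          rw [map_sub, this, sub_self]
        have h2 : ((x : MonoidAlgebra K G) - y) ∈ I := (memI _).mpr h1
        have h3 : u' * ((x : MonoidAlgebra K G) - y) = 0 := by
          rw [mul_sub, x.2, y.2, sub_self]
        have : ((x : MonoidAlgebra K G) - y) = 0 := by rw [← hfix _ h2, h3]
        exact Subtype.ext (by rw [← sub_eq_zero]; exact this)
      · rintro ⟨z, y, rfl⟩
        have hmem : y - u' * y ∈ W := by
          rw [memW, mul_sub, ← mul_assoc, hidem, sub_self]
        refine ⟨⟨y - u' * y, hmem⟩, Subtype.ext ?_⟩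
        simp only [hφdef, LinearMap.coe_mk, AddHom.coe_mk]
        rw [map_sub, map_mul, (memI u').mp hu'I, zero_mul, sub_zero]
        rfl
    refine ⟨LinearEquiv.ofBijective φ hbij, fun x y => ?_⟩
    simp only [LinearEquiv.ofBijective_apply]
    refine Subtype.ext ?_
    simp [hφdef, MulMemClass.coe_mul, map_mul]
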